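/- For the vector field F₉ on ℝ³ given by F₉(x,y,z) = (−(λ+1)yz, λxy, xz) with λ ∈ ℝ, the function y ↦ y (second coordinate) is NOT in general a first integral, but the energy E(x,y,z) = x² + 2yz is a first integral: along any solution curve of F₉, d/dt [x(t)² + 2y(t)z(t)] = 0. -/

import Mathlib

/-- The geodesic field `F₉` of `Q₉` on `h(λ)`: `(−(λ+1)yz, λxy, xz)`. -/
def F9fam (l : ℝ) (v : Fin 3 → ℝ) : Fin 3 → ℝ :=
  ![-(l + 1) * v 1 * v 2, l * v 0 * v 1, v 0 * v 2]

/-- For `F₉`, the second coordinate `y` is not in general a first integral,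
but the energy `E = x² + 2yz` is: its derivative along any solution vanishes. -/
theorem stmt_4 :
    (¬ ∀ (l : ℝ) (γ : ℝ → Fin 3 → ℝ),
        (∀ t, HasDerivAt γ (F9fam l (γ t)) t) → ∀ t, γ t 1 = γ 0 1) ∧
    (∀ (l : ℝ) (γ : ℝ → Fin 3 → ℝ) (t : ℝ), HasDerivAt γ (F9fam l (γ t)) t →
        HasDerivAt (fun u => (γ u 0) ^ 2 + 2 * γ u 1 * γ u 2) 0 t) := by
  constructor
  · intro h
    have := h (-1) (fun t => ![1, Real.exp (-t), Real.exp t]) ?_ 1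
    · simp only [Matrix.cons_val_one, Matrix.head_cons, Matrix.cons_val_zero] at this
      have h1 : Real.exp (-1) < 1 := by
        rw [Real.exp_lt_one_iff]; norm_num
      rw [this] at h1
      simp at h1
    · intro t
      rw [hasDerivAt_pi]
      intro i
      fin_cases i <;> simp [F9fam]
      · exact hasDerivAt_const t 1
      · have := ((Real.hasDerivAt_exp (-t)).comp t (hasDerivAt_neg t))
        simpa [Function.comp_def] using this
      · exact Real.hasDerivAt_exp t
  · intro l γ t h
    rw [hasDerivAt_pi] at h
    have h0 := h 0
    have h1 := h 1
    have h2 := h 2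
    simp only [F9fam, Matrix.cons_val_zero, Matrix.cons_val_one, Matrix.head_cons,
      Matrix.cons_val_two, Matrix.tail_cons] at h0 h1 h2
    have := ((h0.pow 2).add (((h1.const_mul 2).mul h2)))
    exact this.congr_deriv (by ring)
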